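/- For 0 < σ < 1 and c > 0, the map c ↦ P(φ_c) + (c/2) M(φ_c) has positive derivative in c; equivalently, using the scalings P(φ_c) = c^{1/σ} P(φ_1) and M(φ_c) = c^{1/σ-1} M(φ_1), one has (1/σ) P(φ_1) + (1/2)(1/σ - 1) M(φ_1) > 0. -/

import Mathlib

open Real MeasureTheory

noncomputable def Phi (σ c : ℝ) (x : ℝ) : ℝ :=
  (2 * (σ + 1) * c / (σ ^ 2 * (c * x) ^ 2 + 1)) ^ (1 / (2 * σ))

noncomputable def soliton (σ c : ℝ) (x : ℝ) : ℂ :=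
  (Phi σ c x : ℂ) *
    Complex.exp (Complex.I *
      (((c / 2) * x - (1 / (2 * σ + 2)) * ∫ y in (0:ℝ)..x, (Phi σ c y) ^ (2 * σ) : ℝ) : ℂ))

noncomputable def momentum (u : ℝ → ℂ) : ℝ :=
  ∫ x : ℝ, (u x * (starRingEnd ℂ) (deriv u x)).im

noncomputable def mass (u : ℝ → ℂ) : ℝ :=
  ∫ x : ℝ, ‖u x‖ ^ 2

open Filter Topology

namespace DNLS


noncomputable def Q (σ x : ℝ) : ℝ := σ^2*x^2+1

lemma Q_pos (σ x : ℝ) : 0 < Q σ x := by unfold Q; positivity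

lemma Q_one_le (σ x : ℝ) : 1 ≤ Q σ x := by
  unfold Q; nlinarith [sq_nonneg (σ*x)]

lemma contQ (σ : ℝ) : Continuous (Q σ) := by unfold Q; continuity

lemma hasDerivAt_Q (σ x : ℝ) : HasDerivAt (Q σ) (σ^2*(2*x)) x := by
  unfold Q
  simpa using (((hasDerivAt_pow 2 x).const_mul (σ^2)).add_const 1)

lemma cont_Qpow (σ t : ℝ) : Continuous (fun x => Q σ x ^ (-t)) :=
  (contQ σ).rpow_const (fun x => Or.inl (Q_pos σ x).ne')

lemma Qpow_le (σ : ℝ) (hσ : 0 < σ) (hσ1 : σ ≤ 1) {t : ℝ} (ht : 1 ≤ t) (x : ℝ) :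
    Q σ x ^ (-t) ≤ σ⁻¹^2 * (1+x^2)⁻¹ := by
  have h1 : Q σ x ^ (-t) ≤ Q σ x ^ (-(1:ℝ)) :=
    Real.rpow_le_rpow_of_exponent_le (Q_one_le σ x) (by linarith)
  rw [Real.rpow_neg_one] at h1
  have h2 : σ^2 * (1+x^2) ≤ Q σ x := by
    unfold Q; nlinarith [sq_nonneg x, sq_nonneg σ, sq_nonneg (1-σ)]
  have h3 : (Q σ x)⁻¹ ≤ (σ^2 * (1+x^2))⁻¹ := by
    apply inv_anti₀ (by positivity) h2
  calc Q σ x ^ (-t) ≤ (Q σ x)⁻¹ := h1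
    _ ≤ (σ^2 * (1+x^2))⁻¹ := h3
    _ = σ⁻¹^2 * (1+x^2)⁻¹ := by rw [mul_inv]; ring

lemma integrable_Qpow (σ : ℝ) (hσ : 0 < σ) (hσ1 : σ ≤ 1) {t : ℝ} (ht : 1 ≤ t) :
    Integrable (fun x => Q σ x ^ (-t)) := by
  apply Integrable.mono' ((integrable_inv_one_add_sq).const_mul (σ⁻¹^2))
    (cont_Qpow σ t).aestronglyMeasurable
  filter_upwards with x
  rw [Real.norm_eq_abs, abs_of_nonneg (Real.rpow_nonneg (Q_pos σ x).le _)]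
  exact Qpow_le σ hσ hσ1 ht x





lemma hasDerivAt_g (σ : ℝ) {t : ℝ} (ht : 1 ≤ t) (x : ℝ) :
    HasDerivAt (fun x => x * Q σ x ^ (-t))
      ((1-2*t) * Q σ x ^ (-t) + 2*t * Q σ x ^ (-(t+1))) x := by
  have h1 : HasDerivAt (fun x => Q σ x ^ (-t))
      (σ^2*(2*x) * (-t) * Q σ x ^ (-t-1)) x :=
    (hasDerivAt_Q σ x).rpow_const (Or.inl (Q_pos σ x).ne')
  have h2 : HasDerivAt (fun x => x * Q σ x ^ (-t)) _ x := (hasDerivAt_id x).mul h1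
  convert h2 using 1
  have hQ : Q σ x ^ (-t-1) * Q σ x = Q σ x ^ (-t) := by
    rw [← Real.rpow_add_one (Q_pos σ x).ne' (-t-1)]
    norm_num
  have hexp : -(t+1) = -t-1 := by ring
  rw [hexp]
  have hQ' : σ^2*x^2 * Q σ x ^ (-t-1) = Q σ x ^ (-t) - Q σ x ^ (-t-1) := by
    have : Q σ x = σ^2*x^2+1 := rfl
    linear_combination hQ - (Q σ x ^ (-t-1)) * this
  simp only [id_eq]
  linear_combination (2*t)*hQ'

lemma cont_integrand (σ t : ℝ) :
    Continuous (fun x => (1-2*t) * Q σ x ^ (-t) + 2*t * Q σ x ^ (-(t+1))) :=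
  (continuous_const.mul (cont_Qpow σ t)).add (continuous_const.mul (cont_Qpow σ (t+1)))

lemma tendsto_boundary (σ : ℝ) (hσ : 0 < σ) (hσ1 : σ ≤ 1) {t : ℝ} (ht : 1 ≤ t)
    {l : Filter ℝ} (h : Tendsto (fun x : ℝ => |x|) l atTop) :
    Tendsto (fun x => x * Q σ x ^ (-t)) l (𝓝 0) := by
  apply squeeze_zero_norm' (a := fun x => σ⁻¹^2 * |x|⁻¹)
  · filter_upwards [h.eventually_ge_atTop 1] with x hx1
    have hx : (0:ℝ) < |x| := lt_of_lt_of_le one_pos hx1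
    have hQnn : (0:ℝ) ≤ Q σ x ^ (-t) := Real.rpow_nonneg (Q_pos σ x).le _
    calc ‖x * Q σ x ^ (-t)‖ = |x| * Q σ x ^ (-t) := by
          rw [norm_mul, Real.norm_eq_abs, Real.norm_eq_abs, abs_of_nonneg hQnn]
      _ ≤ |x| * (σ⁻¹^2 * (1+x^2)⁻¹) :=
          mul_le_mul_of_nonneg_left (Qpow_le σ hσ hσ1 ht x) (abs_nonneg x)
      _ = σ⁻¹^2 * (|x| * (1+x^2)⁻¹) := by ring
      _ ≤ σ⁻¹^2 * |x|⁻¹ := by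
          apply mul_le_mul_of_nonneg_left _ (by positivity)
          rw [← div_eq_mul_inv, ← one_div, div_le_div_iff₀ (by positivity) hx]
          nlinarith [sq_abs x]
  · have := (tendsto_inv_atTop_zero.comp h).const_mul (σ⁻¹^2)
    simpa using this

lemma integral_g' (σ : ℝ) (hσ : 0 < σ) (hσ1 : σ ≤ 1) {t : ℝ} (ht : 1 ≤ t) :
    ∫ x : ℝ, ((1-2*t) * Q σ x ^ (-t) + 2*t * Q σ x ^ (-(t+1))) = 0 := by
  set f := fun x => (1-2*t) * Q σ x ^ (-t) + 2*t * Q σ x ^ (-(t+1)) with hf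
  have hInt : Integrable f :=
    ((integrable_Qpow σ hσ hσ1 ht).const_mul _).add
      ((integrable_Qpow σ hσ hσ1 (by linarith : (1:ℝ) ≤ t+1)).const_mul _)
  have hIv : ∀ a b : ℝ, ∫ x in a..b, f x = b * Q σ b ^ (-t) - a * Q σ a ^ (-t) := by
    intro a b
    exact intervalIntegral.integral_eq_sub_of_hasDerivAt
      (fun x _ => hasDerivAt_g σ ht x)
      ((cont_integrand σ t).intervalIntegrable a b)
  have h1 : Tendsto (fun R : ℝ => ∫ x in (-R)..R, f x) atTop (𝓝 (∫ x, f x)) :=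
    intervalIntegral_tendsto_integral hInt tendsto_neg_atTop_atBot tendsto_id
  have hbT : Tendsto (fun x => x * Q σ x ^ (-t)) atTop (𝓝 0) :=
    tendsto_boundary σ hσ hσ1 ht (by simpa using tendsto_abs_atTop_atTop)
  have hbB : Tendsto (fun x : ℝ => (-x) * Q σ (-x) ^ (-t)) atTop (𝓝 0) := by
    have habs : Tendsto (fun x : ℝ => |(-x : ℝ)|) atTop atTop := by
      simpa [abs_neg] using tendsto_abs_atTop_atTop
    exact (tendsto_boundary σ hσ hσ1 ht
      (l := atBot) (by simpa using tendsto_abs_atBot_atTop)).comp tendsto_neg_atTop_atBot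
  have h2 : Tendsto (fun R : ℝ => ∫ x in (-R)..R, f x) atTop (𝓝 0) := by
    have := hbT.sub hbB
    rw [sub_zero] at this
    apply this.congr
    intro R
    rw [hIv]
  exact tendsto_nhds_unique h1 h2

lemma J_succ (σ : ℝ) (hσ : 0 < σ) (hσ1 : σ ≤ 1) {t : ℝ} (ht : 1 ≤ t) :
    ∫ x : ℝ, Q σ x ^ (-(t+1)) = (2*t-1)/(2*t) * ∫ x : ℝ, Q σ x ^ (-t) := by
  have h0 := integral_g' σ hσ hσ1 ht
  rw [integral_add ((integrable_Qpow σ hσ hσ1 ht).const_mul _)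
      ((integrable_Qpow σ hσ hσ1 (by linarith : (1:ℝ) ≤ t+1)).const_mul _),
    integral_const_mul, integral_const_mul] at h0
  have ht0 : (2*t) ≠ 0 := by positivity
  set J1 := ∫ x : ℝ, Q σ x ^ (-(t+1)) with hJ1
  set J0 := ∫ x : ℝ, Q σ x ^ (-t) with hJ0
  field_simp
  linarith




variable {σ : ℝ} (hσ : 0 < σ)

lemma C_pos (hσ : 0 < σ) : 0 < 2*(σ+1) := by linarith

lemma phi_eq (x : ℝ) : Phi σ 1 x = (2*(σ+1) / Q σ x) ^ (1/(2*σ)) := by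
  unfold Phi Q; norm_num

lemma base_pos (hσ : 0 < σ) (x : ℝ) : 0 < 2*(σ+1) / Q σ x :=
  div_pos (C_pos hσ) (Q_pos σ x)

lemma phi_pos (hσ : 0 < σ) (x : ℝ) : 0 < Phi σ 1 x := by
  rw [phi_eq]; exact Real.rpow_pos_of_pos (base_pos hσ x) _

lemma phi_2σ (hσ : 0 < σ) (x : ℝ) : Phi σ 1 x ^ (2*σ) = 2*(σ+1) / Q σ x := by
  rw [phi_eq, ← Real.rpow_mul (base_pos hσ x).le,
    show (1/(2*σ)) * (2*σ) = 1 by field_simp]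
  exact Real.rpow_one _

lemma phi_sq (hσ : 0 < σ) (x : ℝ) :
    Phi σ 1 x ^ (2:ℕ) = (2*(σ+1))^(1/σ) * Q σ x ^ (-(1/σ)) := by
  rw [phi_eq, ← Real.rpow_natCast _ 2, ← Real.rpow_mul (base_pos hσ x).le]
  rw [show (1/(2*σ)) * (2:ℕ) = 1/σ by push_cast; field_simp]
  rw [Real.div_rpow (C_pos hσ).le (Q_pos σ x).le, Real.rpow_neg (Q_pos σ x).le,
    div_eq_mul_inv]

lemma phi_sq_mul (hσ : 0 < σ) (x : ℝ) :
    Phi σ 1 x ^ (2:ℕ) * Phi σ 1 x ^ (2*σ)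
      = (2*(σ+1))^(1/σ+1) * Q σ x ^ (-(1/σ+1)) := by
  rw [phi_sq hσ, phi_2σ hσ]
  rw [Real.rpow_add_one (C_pos hσ).ne', show -(1/σ+1) = -(1/σ) + (-1) by ring,
    Real.rpow_add (Q_pos σ x), Real.rpow_neg_one]
  field_simp

lemma cont_phi2σ (hσ : 0 < σ) : Continuous (fun y => Phi σ 1 y ^ (2*σ)) := by
  have : (fun y => Phi σ 1 y ^ (2*σ)) = fun y => 2*(σ+1) / Q σ y := by
    funext y; exact phi_2σ hσ y
  rw [this]
  exact continuous_const.div (contQ σ) (fun x => (Q_pos σ x).ne')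




noncomputable def theta (σ : ℝ) (x : ℝ) : ℝ :=
  ((1:ℝ) / 2) * x - (1 / (2 * σ + 2)) * ∫ y in (0:ℝ)..x, (Phi σ 1 y) ^ (2 * σ)

lemma soliton_eq (σ : ℝ) (x : ℝ) :
    soliton σ 1 x = (Phi σ 1 x : ℂ) * Complex.exp (Complex.I * (theta σ x : ℂ)) := rfl

noncomputable def thetaD (σ : ℝ) (x : ℝ) : ℝ :=
  1/2 - (1/(2*σ+2)) * (2*(σ+1) / Q σ x)

lemma hasDerivAt_theta {σ : ℝ} (hσ : 0 < σ) (x : ℝ) :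
    HasDerivAt (theta σ) (thetaD σ x) x := by
  have hFTC : HasDerivAt (fun u => ∫ y in (0:ℝ)..u, (Phi σ 1 y) ^ (2*σ))
      ((Phi σ 1 x) ^ (2*σ)) x :=
    intervalIntegral.integral_hasDerivAt_right
      ((cont_phi2σ hσ).intervalIntegrable 0 x)
      ((cont_phi2σ hσ).aestronglyMeasurable.stronglyMeasurableAtFilter)
      (cont_phi2σ hσ).continuousAt
  have h1 : HasDerivAt (fun u : ℝ => ((1:ℝ)/2) * u) (1/2) x := by
    simpa using (hasDerivAt_id x).const_mul ((1:ℝ)/2)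
  have : HasDerivAt (fun u => (1:ℝ)/2 * u - 1/(2*σ+2) * ∫ y in (0:ℝ)..u, (Phi σ 1 y) ^ (2*σ)) _ x :=
    h1.sub (hFTC.const_mul (1/(2*σ+2)))
  unfold theta thetaD
  rw [← phi_2σ hσ x]
  convert this using 1

lemma exists_hasDerivAt_phi {σ : ℝ} (hσ : 0 < σ) (x : ℝ) :
    ∃ d : ℝ, HasDerivAt (fun y => Phi σ 1 y) d x := by
  have hb : HasDerivAt (fun y => 2*(σ+1) / Q σ y)
      (-(2*(σ+1)) * (σ^2*(2*x)) / (Q σ x)^2) x := by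
    have hb0 : HasDerivAt (fun y => 2*(σ+1) / Q σ y) _ x :=
      (hasDerivAt_const x (2*(σ+1))).div (hasDerivAt_Q σ x) (Q_pos σ x).ne'
    simpa using hb0
  have h := hb.rpow_const (p := 1/(2*σ)) (Or.inl (base_pos hσ x).ne')
  have hfun : (fun y => Phi σ 1 y) = fun y => (2*(σ+1) / Q σ y) ^ (1/(2*σ)) := by
    funext y; exact phi_eq y
  rw [hfun]
  exact ⟨_, h⟩

lemma soliton_hasDerivAt {σ : ℝ} (hσ : 0 < σ) (x : ℝ) :
    ∃ d : ℝ, HasDerivAt (soliton σ 1)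
      ((d : ℂ) * Complex.exp (Complex.I * (theta σ x : ℂ))
        + (Phi σ 1 x : ℂ) * (Complex.I * (thetaD σ x : ℂ)
            * Complex.exp (Complex.I * (theta σ x : ℂ)))) x := by
  obtain ⟨d, hd⟩ := exists_hasDerivAt_phi hσ x
  refine ⟨d, ?_⟩
  have h1 : HasDerivAt (fun y => ((Phi σ 1 y : ℝ) : ℂ)) (d : ℂ) x := hd.ofReal_comp
  have h2 : HasDerivAt (fun y => ((theta σ y : ℝ) : ℂ)) ((thetaD σ x : ℝ) : ℂ) x :=
    (hasDerivAt_theta hσ x).ofReal_comp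
  have h3 : HasDerivAt (fun y => Complex.I * ((theta σ y : ℝ) : ℂ))
      (Complex.I * (thetaD σ x : ℂ)) x := h2.const_mul Complex.I
  have h4 := h3.cexp
  have h5 : HasDerivAt (fun y =>
      ((Phi σ 1 y : ℝ) : ℂ) * Complex.exp (Complex.I * ((theta σ y : ℝ) : ℂ))) _ x := h1.mul h4
  have : soliton σ 1 = fun y =>
      ((Phi σ 1 y : ℝ) : ℂ) * Complex.exp (Complex.I * ((theta σ y : ℝ) : ℂ)) := by
    funext y; exact soliton_eq σ y
  rw [this]
  convert h5 using 1
  ring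

lemma momentum_integrand {σ : ℝ} (hσ : 0 < σ) (x : ℝ) :
    (soliton σ 1 x * (starRingEnd ℂ) (deriv (soliton σ 1) x)).im
      = -((Phi σ 1 x)^(2:ℕ) * thetaD σ x) := by
  obtain ⟨d, hd⟩ := soliton_hasDerivAt hσ x
  rw [hd.deriv, soliton_eq]
  set φ := Phi σ 1 x
  set θ := theta σ x
  set θ' := thetaD σ x
  have hE : Complex.exp (Complex.I * (θ : ℂ))
      * (starRingEnd ℂ) (Complex.exp (Complex.I * (θ : ℂ))) = 1 := by
    rw [← Complex.exp_conj, ← Complex.exp_add]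
    simp [Complex.conj_I, Complex.conj_ofReal]
  have key : (φ : ℂ) * Complex.exp (Complex.I * (θ : ℂ))
      * (starRingEnd ℂ) ((d : ℂ) * Complex.exp (Complex.I * (θ : ℂ))
        + (φ : ℂ) * (Complex.I * (θ' : ℂ) * Complex.exp (Complex.I * (θ : ℂ))))
      = ((φ * d : ℝ) : ℂ) - Complex.I * ((φ^(2:ℕ) * θ' : ℝ) : ℂ) := by
    simp only [map_add, map_mul, Complex.conj_I, Complex.conj_ofReal]
    push_cast
    linear_combination ((φ:ℂ)*(d:ℂ) - Complex.I*(φ:ℂ)^2*(θ':ℂ)) * hE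
  rw [key]
  simp only [Complex.sub_im, Complex.ofReal_im, Complex.mul_im, Complex.I_re,
    Complex.I_im, Complex.ofReal_re, zero_sub]
  ring


lemma momentum_integrand_Q {σ : ℝ} (hσ : 0 < σ) (x : ℝ) :
    (soliton σ 1 x * (starRingEnd ℂ) (deriv (soliton σ 1) x)).im
      = (2*(σ+1))^(1/σ+1)/(2*σ+2) * Q σ x ^ (-(1/σ+1))
        - (1/2) * ((2*(σ+1))^(1/σ) * Q σ x ^ (-(1/σ))) := by
  rw [momentum_integrand hσ x]
  unfold thetaD
  rw [← phi_2σ hσ x]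
  have h2 := phi_sq_mul hσ x
  have h1 := phi_sq hσ x
  linear_combination (1/(2*σ+2)) * h2 - (1/2) * h1

lemma mass_integrand {σ : ℝ} (hσ : 0 < σ) (x : ℝ) :
    ‖soliton σ 1 x‖ ^ 2 = (2*(σ+1))^(1/σ) * Q σ x ^ (-(1/σ)) := by
  rw [soliton_eq, norm_mul]
  have hE : ‖Complex.exp (Complex.I * ((theta σ x : ℝ) : ℂ))‖ = 1 := by
    rw [Complex.norm_exp]
    simp
  rw [hE, mul_one, Complex.norm_real, Real.norm_eq_abs]
  rw [← phi_sq hσ x]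
  exact sq_abs _

theorem main (σ : ℝ) (hσ : 0 < σ) (hσ1 : σ < 1) :
    0 < (1 / σ) * momentum (soliton σ 1) + (1 / 2) * (1 / σ - 1) * mass (soliton σ 1) := by
  have hσ1' : σ ≤ 1 := hσ1.le
  have ht : (1:ℝ) ≤ 1/σ := by
    rw [le_div_iff₀ hσ]; linarith
  set J0 := ∫ x : ℝ, Q σ x ^ (-(1/σ)) with hJ0def
  set J1 := ∫ x : ℝ, Q σ x ^ (-(1/σ+1)) with hJ1def
  have hI0 : Integrable (fun x => Q σ x ^ (-(1/σ))) := integrable_Qpow σ hσ hσ1' ht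
  have hI1 : Integrable (fun x => Q σ x ^ (-(1/σ+1))) :=
    integrable_Qpow σ hσ hσ1' (by linarith : (1:ℝ) ≤ 1/σ+1)
  have hmom : momentum (soliton σ 1)
      = (2*(σ+1))^(1/σ+1)/(2*σ+2) * J1 - (1/2) * ((2*(σ+1))^(1/σ) * J0) := by
    unfold momentum
    rw [integral_congr_ae (Filter.Eventually.of_forall (momentum_integrand_Q hσ))]
    rw [integral_sub (hI1.const_mul _) ((hI0.const_mul _).const_mul _),
      integral_const_mul, integral_const_mul, integral_const_mul]
  have hmass : mass (soliton σ 1) = (2*(σ+1))^(1/σ) * J0 := by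
    unfold mass
    rw [integral_congr_ae (Filter.Eventually.of_forall (mass_integrand hσ))]
    rw [integral_const_mul]
  have hJrel : J1 = (2*(1/σ)-1)/(2*(1/σ)) * J0 := J_succ σ hσ hσ1' ht
  have hJ0pos : 0 < J0 := by
    rw [hJ0def, integral_pos_iff_support_of_nonneg
      (fun x => Real.rpow_nonneg (Q_pos σ x).le _) hI0]
    have : Function.support (fun x : ℝ => Q σ x ^ (-(1/σ))) = Set.univ :=
      Set.eq_univ_iff_forall.mpr
        (fun x => Function.mem_support.mpr (Real.rpow_pos_of_pos (Q_pos σ x) _).ne')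
    rw [this]
    simp [Real.volume_univ]
  have hCb : 0 < (2*(σ+1))^(1/σ) := Real.rpow_pos_of_pos (C_pos hσ) _
  have hCa : (2*(σ+1))^(1/σ+1) = (2*(σ+1))^(1/σ) * (2*(σ+1)) :=
    Real.rpow_add_one (C_pos hσ).ne' _
  rw [hmom, hmass, hJrel, hCa]
  have hσ0 : σ ≠ 0 := hσ.ne'
  have key : (1 / σ) * ((2*(σ+1))^(1/σ) * (2*(σ+1))/(2*σ+2)
        * ((2*(1/σ)-1)/(2*(1/σ)) * J0) - (1/2) * ((2*(σ+1))^(1/σ) * J0))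
      + (1 / 2) * (1 / σ - 1) * ((2*(σ+1))^(1/σ) * J0)
      = (1-σ)/σ * ((2*(σ+1))^(1/σ) * J0) := by
    have hden : (2*σ+2) ≠ 0 := by linarith
    field_simp
    ring
  rw [key]
  have : 0 < (1-σ)/σ := by
    apply div_pos <;> linarith
  positivity

end DNLS

theorem dc_momentum_mass_pos (σ : ℝ) (hσ : 0 < σ) (hσ1 : σ < 1) :
    0 < (1 / σ) * momentum (soliton σ 1) + (1 / 2) * (1 / σ - 1) * mass (soliton σ 1) :=
  DNLS.main σ hσ hσ1
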